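/- Let ω = e^{2πi/3}. The subgroup of GL₅(ℂ) generated by the diagonal matrices D₁ = diag(1,ω,1,ω,ω), D₂ = diag(1,1,ω,ω,ω), D₃ = diag(1,1,1,ω,ω²) and the matrix Ψ(J) = (1/3)·[[-1,-2,-2,-2,-2],[-1,1,-2,1,1],[-1,-2,1,1,1],[-1,1,1,1,-2],[-1,1,1,-2,1]] acts irreducibly on ℂ⁵. -/
import Mathlib


open Matrix

noncomputable section

/-- `ω = e^{2πi/3}`. -/
def ω : ℂ := Complex.exp (2 * Real.pi * Complex.I / 3)

def D1 : Matrix (Fin 5) (Fin 5) ℂ := Matrix.diagonal ![1, ω, 1, ω, ω]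
def D2 : Matrix (Fin 5) (Fin 5) ℂ := Matrix.diagonal ![1, 1, ω, ω, ω]
def D3 : Matrix (Fin 5) (Fin 5) ℂ := Matrix.diagonal ![1, 1, 1, ω, ω^2]

def PsiJ : Matrix (Fin 5) (Fin 5) ℂ :=
  (1/3 : ℂ) • !![-1,-2,-2,-2,-2; -1,1,-2,1,1; -1,-2,1,1,1; -1,1,1,1,-2; -1,1,1,-2,1]

lemma hω3 : ω ^ 3 = 1 := by
  rw [ω, ← Complex.exp_nat_mul]
  rw [show (3:ℕ) * (2 * Real.pi * Complex.I / 3) = 2 * Real.pi * Complex.I by push_cast; ring]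
  simp [Complex.exp_int_mul_two_pi_mul_I 1]

lemma hωne : ω ≠ 1 := by
  intro h
  rw [ω, Complex.exp_eq_one_iff] at h
  obtain ⟨n, hn⟩ := h
  have h2 : (2 * Real.pi * Complex.I : ℂ) ≠ 0 := by
    simp [Real.pi_ne_zero, Complex.I_ne_zero]
  have h3 : (3 * n : ℂ) * (2 * Real.pi * Complex.I) = 1 * (2 * Real.pi * Complex.I) := by
    linear_combination -3 * hn
  have h4 : (3 * n : ℂ) = 1 := mul_right_cancel₀ h2 h3
  have h5 : ((3 * n : ℤ) : ℂ) = ((1 : ℤ) : ℂ) := by push_cast; linear_combination h4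
  have := Int.cast_injective h5
  omega

lemma hsum : 1 + ω + ω ^ 2 = 0 := by
  have h : (ω - 1) * (1 + ω + ω ^ 2) = 0 := by linear_combination hω3
  rcases mul_eq_zero.1 h with h' | h'
  · exact absurd (by linear_combination h' : ω = 1) hωne
  · exact h'

/-- The filtering polynomial. -/
def f (y : ℂ) : ℂ := (1/3 : ℂ) * (1 + y + y ^ 2)

lemma f_one : f 1 = 1 := by norm_num [f]
lemma f_ω : f ω = 0 := by rw [f]; linear_combination (1/3 : ℂ) * hsum
lemma f_ω2 : f (ω ^ 2) = 0 := by
  rw [f]; linear_combination (1/3 : ℂ) * hsum + (ω/3) * hω3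

-- normalization lemmas for products of ω powers
lemma hA : ω ^ 2 * ω = 1 := by linear_combination hω3
lemma hB : ω ^ 2 * ω ^ 2 = ω := by linear_combination ω * hω3
lemma hC : ω * ω = ω ^ 2 := by ring
lemma hD : ω * ω ^ 2 = 1 := by linear_combination hω3

/-- Filtering step: an invariant subspace under `diagonal d` is stable under
pointwise multiplication by `j ↦ f (c * d j)`. -/
lemma filter_mem (d : Fin 5 → ℂ) (V : Submodule ℂ (Fin 5 → ℂ))
    (hV : ∀ w ∈ V, (Matrix.diagonal d).mulVec w ∈ V) (c : ℂ)
    (w : Fin 5 → ℂ) (hw : w ∈ V) : (fun j => f (c * d j) * w j) ∈ V := by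
  have h1 := hV w hw
  have h2 := hV _ h1
  have key : (fun j => f (c * d j) * w j)
      = (1/3 : ℂ) • w + (c/3 : ℂ) • (Matrix.diagonal d).mulVec w
        + (c^2/3 : ℂ) • (Matrix.diagonal d).mulVec ((Matrix.diagonal d).mulVec w) := by
    funext j
    simp [Matrix.mulVec_diagonal, f]
    ring
  rw [key]
  exact V.add_mem (V.add_mem (V.smul_mem _ hw) (V.smul_mem _ h1)) (V.smul_mem _ h2)

/-- Any invariant subspace under `D1, D2, D3` contains every coordinate projection
of each of its elements. -/
lemma single_mem (V : Submodule ℂ (Fin 5 → ℂ))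
    (h1 : ∀ w ∈ V, D1.mulVec w ∈ V) (h2 : ∀ w ∈ V, D2.mulVec w ∈ V)
    (h3 : ∀ w ∈ V, D3.mulVec w ∈ V)
    (v : Fin 5 → ℂ) (hv : v ∈ V) (i : Fin 5) : Pi.single i (v i) ∈ V := by
  have h1' : ∀ w ∈ V, (Matrix.diagonal ![1, ω, 1, ω, ω]).mulVec w ∈ V := by
    simpa [D1] using h1
  have h2' : ∀ w ∈ V, (Matrix.diagonal ![1, 1, ω, ω, ω]).mulVec w ∈ V := by
    simpa [D2] using h2
  have h3' : ∀ w ∈ V, (Matrix.diagonal ![1, 1, 1, ω, ω^2]).mulVec w ∈ V := by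
    simpa [D3] using h3
  fin_cases i
  · have m3 := filter_mem _ V h3' 1 _ (filter_mem _ V h2' 1 _ (filter_mem _ V h1' 1 v hv))
    convert m3 using 1
    funext j
    fin_cases j <;> simp [Pi.single_apply, hA, hB, hC, hD, f_one, f_ω, f_ω2]
  · have m3 := filter_mem _ V h3' 1 _ (filter_mem _ V h2' 1 _ (filter_mem _ V h1' (ω^2) v hv))
    convert m3 using 1
    funext j
    fin_cases j <;> simp [Pi.single_apply, hA, hB, hC, hD, f_one, f_ω, f_ω2]
  · have m3 := filter_mem _ V h3' 1 _ (filter_mem _ V h2' (ω^2) _ (filter_mem _ V h1' 1 v hv))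
    convert m3 using 1
    funext j
    fin_cases j <;> simp [Pi.single_apply, hA, hB, hC, hD, f_one, f_ω, f_ω2]
  · have m3 := filter_mem _ V h3' (ω^2) _
      (filter_mem _ V h2' (ω^2) _ (filter_mem _ V h1' (ω^2) v hv))
    convert m3 using 1
    funext j
    fin_cases j <;> simp [Pi.single_apply, hA, hB, hC, hD, f_one, f_ω, f_ω2]
  · have m3 := filter_mem _ V h3' ω _
      (filter_mem _ V h2' (ω^2) _ (filter_mem _ V h1' (ω^2) v hv))
    convert m3 using 1
    funext j
    fin_cases j <;> simp [Pi.single_apply, hA, hB, hC, hD, f_one, f_ω, f_ω2]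

lemma PsiJ_ne (i j : Fin 5) : PsiJ i j ≠ 0 := by
  fin_cases i <;> fin_cases j <;> norm_num [PsiJ]

lemma single_one_mem (V : Submodule ℂ (Fin 5 → ℂ)) (j : Fin 5) (c : ℂ) (hc : c ≠ 0)
    (h : Pi.single j c ∈ V) : Pi.single j (1 : ℂ) ∈ V := by
  have h' := V.smul_mem c⁻¹ h
  have : c⁻¹ • (Pi.single j c : Fin 5 → ℂ) = Pi.single j (1 : ℂ) := by
    funext k
    by_cases hk : k = j <;> simp [Pi.single_apply, hk, inv_mul_cancel₀ hc]
  rwa [this] at h'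

/-- The subgroup of `GL₅(ℂ)` generated by `D₁, D₂, D₃` and `Ψ(J)` acts irreducibly on
`ℂ⁵`: any subspace invariant under the four generators is `⊥` or `⊤`. -/
theorem burkhardt_representation_irreducible :
    ∀ V : Submodule ℂ (Fin 5 → ℂ),
      (∀ M ∈ ({D1, D2, D3, PsiJ} : Set (Matrix (Fin 5) (Fin 5) ℂ)),
        ∀ v ∈ V, M.mulVec v ∈ V) →
      V = ⊥ ∨ V = ⊤ := by
  intro V hV
  have hD1 : ∀ w ∈ V, D1.mulVec w ∈ V := hV D1 (by simp)
  have hD2 : ∀ w ∈ V, D2.mulVec w ∈ V := hV D2 (by simp)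
  have hD3 : ∀ w ∈ V, D3.mulVec w ∈ V := hV D3 (by simp)
  have hP : ∀ w ∈ V, PsiJ.mulVec w ∈ V := hV PsiJ (by simp)
  by_cases hbot : V = ⊥
  · exact Or.inl hbot
  right
  obtain ⟨v, hvV, hv0⟩ := Submodule.ne_bot_iff V |>.mp hbot
  obtain ⟨i, hvi⟩ : ∃ i, v i ≠ 0 := by
    by_contra h
    push_neg at h
    exact hv0 (funext fun i => h i)
  have hei : Pi.single i (1 : ℂ) ∈ V :=
    single_one_mem V i (v i) hvi (single_mem V hD1 hD2 hD3 v hvV i)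
  have huV : PsiJ.mulVec (Pi.single i (1 : ℂ)) ∈ V := hP _ hei
  have hall : ∀ j : Fin 5, Pi.single j (1 : ℂ) ∈ V := by
    intro j
    have hs := single_mem V hD1 hD2 hD3 _ huV j
    have huj : PsiJ.mulVec (Pi.single i (1 : ℂ)) j = PsiJ j i := by
      simp [Matrix.mulVec_single]
    rw [huj] at hs
    exact single_one_mem V j (PsiJ j i) (PsiJ_ne j i) hs
  rw [Submodule.eq_top_iff']
  intro w
  have : w = ∑ j : Fin 5, Pi.single j (w j) := (Finset.univ_sum_single w).symm
  rw [this]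
  refine Submodule.sum_mem V fun j _ => ?_
  have : (Pi.single j (w j) : Fin 5 → ℂ) = (w j) • (Pi.single j (1 : ℂ) : Fin 5 → ℂ) := by
    funext k
    by_cases hk : k = j <;> simp [Pi.single_apply, hk]
  rw [this]
  exact V.smul_mem _ (hall j)

end
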